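/- Let D be a nonempty finite subset of ℕ not equal to {0}, and let Λ_D ⊆ ℤ² be the subgroup generated by S_D = {(1,−1)} ∪ ⋃_{r∈D} {(−r+i, i) : 0 ≤ i ≤ r}. If ι = gcd{r+2 : r ∈ D} is odd then Λ_D = ℤ², and if ι is even then Λ_D = {(i,j) ∈ ℤ² : i + j is even}. -/
import Mathlib


/-- The step set of tandem walks with face-step levels in `D`. -/
def tandemSteps (D : Finset ℕ) : Set (ℤ × ℤ) :=
  {(1, -1)} ∪ {q | ∃ r ∈ D, ∃ i : ℕ, i ≤ r ∧ q = (-(r : ℤ) + i, (i : ℤ))}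

/-- The subgroup of `ℤ²` of points with even coordinate sum. -/
def evenSub : AddSubgroup (ℤ × ℤ) where
  carrier := {q | Even (q.1 + q.2)}
  zero_mem' := by simp
  add_mem' := by
    rintro a b ⟨m, hm⟩ ⟨n, hn⟩
    exact ⟨m + n, by simp only [Prod.fst_add, Prod.snd_add]; omega⟩
  neg_mem' := by
    rintro a ⟨m, hm⟩
    exact ⟨-m, by simp only [Prod.fst_neg, Prod.snd_neg]; omega⟩

/-- The lattice `Λ_D` spanned by `S_D` is `ℤ²` if `ι = gcd(r+2, r ∈ D)` is odd,
and `{(i,j) : i+j even}` if `ι` is even. -/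
theorem tandem_lattice (D : Finset ℕ) (hD : D.Nonempty) (hD0 : D ≠ {0}) :
    (Odd (D.gcd (fun r => r + 2)) → AddSubgroup.closure (tandemSteps D) = ⊤) ∧
    (Even (D.gcd (fun r => r + 2)) →
      (AddSubgroup.closure (tandemSteps D) : Set (ℤ × ℤ)) = {q | Even (q.1 + q.2)}) := by
  set G := AddSubgroup.closure (tandemSteps D) with hG
  -- membership of generators
  have hstep : ∀ r ∈ D, ∀ i : ℕ, i ≤ r → ((-(r : ℤ) + i, (i : ℤ))) ∈ G :=
    fun r hr i hi => AddSubgroup.subset_closure (Or.inr ⟨r, hr, i, hi, rfl⟩)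
  have h1m1 : ((1 : ℤ), (-1 : ℤ)) ∈ G := AddSubgroup.subset_closure (Or.inl rfl)
  -- D contains a positive element
  obtain ⟨r₀, hr₀, hr₀pos⟩ : ∃ r ∈ D, 1 ≤ r := by
    by_contra h
    push_neg at h
    apply hD0
    rcases Finset.subset_singleton_iff.mp (fun x hx =>
        Finset.mem_singleton.mpr (Nat.lt_one_iff.mp (h x hx))) with h0 | h0
    · exact absurd h0 (Finset.nonempty_iff_ne_empty.mp hD)
    · exact h0
  -- (1,1) in G
  have h11 : ((1 : ℤ), (1 : ℤ)) ∈ G := by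
    have ha := hstep r₀ hr₀ 1 hr₀pos
    have hb := hstep r₀ hr₀ 0 (Nat.zero_le _)
    have : ((1 : ℤ), (1 : ℤ)) =
        (-(r₀ : ℤ) + (1 : ℕ), ((1 : ℕ) : ℤ)) - (-(r₀ : ℤ) + (0 : ℕ), ((0 : ℕ) : ℤ)) := by
      simp [Prod.ext_iff]
    rw [this]
    exact sub_mem ha hb
  -- every even-sum point is in G
  have hL : ∀ q : ℤ × ℤ, Even (q.1 + q.2) → q ∈ G := by
    rintro q ⟨k, hk⟩
    have hq : q = k • ((1 : ℤ), (1 : ℤ)) + (q.1 - k) • ((1 : ℤ), (-1 : ℤ)) := by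
      simp only [Prod.smul_mk, smul_eq_mul, Prod.mk_add_mk, Prod.ext_iff]
      constructor <;> omega
    rw [hq]
    exact add_mem (zsmul_mem h11 k) (zsmul_mem h1m1 _)
  constructor
  · -- odd case
    intro hodd
    obtain ⟨r, hr, hrodd⟩ : ∃ r ∈ D, Odd r := by
      by_contra h
      push_neg at h
      simp only [Nat.not_odd_iff_even] at h
      have h2 : 2 ∣ D.gcd (fun r => r + 2) := by
        apply Finset.dvd_gcd
        intro r hr
        obtain ⟨m, hm⟩ := h r hr
        exact ⟨m + 1, by omega⟩
      exact (Nat.not_even_iff_odd.mpr hodd) ((even_iff_two_dvd).mpr h2)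
    have hr0 : (-(r : ℤ), (0 : ℤ)) ∈ G := by
      have := hstep r hr 0 (Nat.zero_le _)
      simpa using this
    have h10 : ((1 : ℤ), (0 : ℤ)) ∈ G := by
      have heven : Even (((r : ℤ) + 1) + (0 : ℤ)) := by
        obtain ⟨m, hm⟩ := hrodd
        exact ⟨m + 1, by omega⟩
      have := add_mem hr0 (hL ((r : ℤ) + 1, (0 : ℤ)) heven)
      have heq : ((1 : ℤ), (0 : ℤ)) = (-(r : ℤ), (0 : ℤ)) + ((r : ℤ) + 1, (0 : ℤ)) := by
        simp [Prod.ext_iff]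
      rw [heq]
      exact this
    rw [AddSubgroup.eq_top_iff']
    intro x
    have hx : x = x.2 • ((1 : ℤ), (1 : ℤ)) + (x.1 - x.2) • ((1 : ℤ), (0 : ℤ)) := by
      simp only [Prod.smul_mk, smul_eq_mul, Prod.mk_add_mk, Prod.ext_iff]
      constructor <;> omega
    rw [hx]
    exact add_mem (zsmul_mem h11 _) (zsmul_mem h10 _)
  · -- even case
    intro heven
    have hall : ∀ r ∈ D, Even r := by
      intro r hr
      have h2 : 2 ∣ r + 2 := by
        obtain ⟨m, hm⟩ := heven
        calc (2 : ℕ) ∣ D.gcd (fun r => r + 2) := ⟨m, by omega⟩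
          _ ∣ r + 2 := Finset.gcd_dvd hr
      obtain ⟨m, hm⟩ := h2
      exact ⟨m - 1, by omega⟩
    have hle : G ≤ evenSub := by
      rw [hG]
      refine (AddSubgroup.closure_le _).mpr ?_
      rintro q (hq | ⟨r, hr, i, hi, rfl⟩)
      · rw [Set.mem_singleton_iff] at hq
        subst hq
        exact ⟨0, by norm_num⟩
      · obtain ⟨m, hm⟩ := hall r hr
        exact ⟨(i : ℤ) - m, by push_cast [hm]; ring⟩
    ext q
    exact ⟨fun h => hle h, fun h => hL q h⟩
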